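/- Let Π be a plane in Euclidean 3-space, ℓ a line with ℓ ⊆ Π, o ∈ Π a point and ρ > 0, and let S₁, S₂, S₃ be spheres with radii r₁, r₂, r₃ > 0 such that the circle Π ∩ S(o,ρ) is contained in Sᵢ for i = 1,2,3 (the spheres meet in a common circle lying in the plane Π containing ℓ). Then the set of lines that meet ℓ and are tangent to all three spheres is infinite; indeed every line contained in Π that is tangent to the circle Π ∩ S(o,ρ) (i.e. lies in Π at distance ρ from o) and is not parallel to ℓ is such a line. -/

import Mathlib

noncomputable section

/-- Euclidean 3-space. -/
abbrev E3 : Type := EuclideanSpace ℝ (Fin 3)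

/-- A line in `ℝ³`: a 1-dimensional affine subspace. -/
def IsLine (L : AffineSubspace ℝ E3) : Prop := Module.finrank ℝ L.direction = 1

/-- A plane in `ℝ³`: a 2-dimensional affine subspace. -/
def IsPlane (P : AffineSubspace ℝ E3) : Prop := Module.finrank ℝ P.direction = 2

/-- A line is tangent to the sphere with centre `c` and radius `r` if the distance
from `c` to the line equals `r`. -/
def Tangent (c : E3) (r : ℝ) (L : AffineSubspace ℝ E3) : Prop :=
  Metric.infDist c (L : Set E3) = r

/-- A line `L` meets a line `ℓ` if they have a common point. -/
def Meets (L ℓ : AffineSubspace ℝ E3) : Prop :=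
  ((L : Set E3) ∩ (ℓ : Set E3)).Nonempty

open Metric Set
open scoped RealInnerProductSpace

lemma my_le_infDist {x : E3} {s : Set E3} {b : ℝ} (hs : s.Nonempty)
    (h : ∀ y ∈ s, b ≤ dist x y) : b ≤ Metric.infDist x s :=
  le_of_not_gt fun hlt => by
    obtain ⟨y, hy, hd⟩ := (Metric.infDist_lt_iff hs).mp hlt
    exact absurd (h y hy) (not_le.mpr hd)

lemma key_tangent (P : AffineSubspace ℝ E3) (o c : E3) (ρ r : ℝ) (hρ : 0 < ρ) (hr : 0 < r)
    (hperp : ∀ y ∈ P.direction, ⟪c - o, y⟫ = 0) (hnorm : ‖c - o‖^2 + ρ^2 = r^2)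
    (L : AffineSubspace ℝ E3) (hLne : (L : Set E3).Nonempty)
    (hLP : (L : Set E3) ⊆ (P : Set E3)) (hoP : o ∈ P)
    (hdist : Metric.infDist o (L : Set E3) = ρ) : Metric.infDist c (L : Set E3) = r := by
  have hkey : ∀ p ∈ L, dist c p ^ 2 = ‖c - o‖^2 + dist o p ^ 2 := by
    intro p hp
    have hpo : p -ᵥ o ∈ P.direction := AffineSubspace.vsub_mem_direction (hLP hp) hoP
    have hip : ⟪c - o, p - o⟫ = 0 := hperp _ (by simpa using hpo)
    have : c - p = (c - o) - (p - o) := by abel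
    rw [dist_eq_norm, dist_eq_norm, this, norm_sub_sq_real, hip]
    ring_nf
    rw [norm_sub_rev p o]
  have hcl : IsClosed (L : Set E3) := AffineSubspace.closed_of_finiteDimensional L
  obtain ⟨p₀, hp₀, hd₀⟩ := hcl.exists_infDist_eq_dist hLne o
  have hdp₀ : dist o p₀ = ρ := by rw [← hd₀, hdist]
  have hcp₀ : dist c p₀ = r := by
    have h2 : dist c p₀ ^ 2 = r ^ 2 := by rw [hkey p₀ hp₀, hdp₀, hnorm]
    nlinarith [dist_nonneg (x := c) (y := p₀)]
  refine le_antisymm (hcp₀ ▸ Metric.infDist_le_dist_of_mem hp₀) (my_le_infDist hLne ?_)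
  intro p hp
  have h1 : ρ ≤ dist o p := hdist ▸ Metric.infDist_le_dist_of_mem hp
  nlinarith [hkey p hp, dist_nonneg (x := c) (y := p), dist_nonneg (x := o) (y := p)]

lemma circle_mem (P : AffineSubspace ℝ E3) (o : E3) (hoP : o ∈ P) (ρ : ℝ)
    (y : E3) (hy : y ∈ P.direction) (hny : ‖y‖ = ρ) :
    (y + o) ∈ (P : Set E3) ∩ Metric.sphere o ρ := by
  constructor
  · exact AffineSubspace.vadd_mem_of_mem_direction hy hoP
  · simp [mem_sphere_iff_norm, hny]

lemma sphere_center (P : AffineSubspace ℝ E3) (o : E3) (hoP : o ∈ P) (ρ : ℝ) (hρ : 0 < ρ)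
    (hU : ∃ u : E3, u ∈ P.direction ∧ ‖u‖ = 1)
    (c : E3) (r : ℝ)
    (h : (P : Set E3) ∩ Metric.sphere o ρ ⊆ Metric.sphere c r) :
    (∀ y ∈ P.direction, ⟪c - o, y⟫ = 0) ∧ ‖c - o‖^2 + ρ^2 = r^2 := by
  have key : ∀ y : E3, y ∈ P.direction → ‖y‖ = ρ → ‖y - (c - o)‖ ^ 2 = r ^ 2 := by
    intro y hy hny
    have := h (circle_mem P o hoP ρ y hy hny)
    rw [mem_sphere_iff_norm] at this
    have h2 : y + o - c = y - (c - o) := by abel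
    rw [h2] at this
    rw [this]
  have perp : ∀ y ∈ P.direction, ⟪c - o, y⟫ = 0 := by
    intro y hy
    rcases eq_or_ne y 0 with rfl | hy0
    · simp
    · have hyn : ‖y‖ ≠ 0 := norm_ne_zero_iff.mpr hy0
      have hn : ‖(ρ / ‖y‖) • y‖ = ρ := by
        rw [norm_smul, Real.norm_eq_abs, abs_of_pos (div_pos hρ (norm_pos_iff.mpr hy0))]
        field_simp
      have h1 := key ((ρ / ‖y‖) • y) (Submodule.smul_mem _ _ hy) hn
      have h2 := key (-((ρ / ‖y‖) • y)) (Submodule.neg_mem _ (Submodule.smul_mem _ _ hy))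
        (by rw [norm_neg]; exact hn)
      rw [norm_sub_sq_real] at h1
      have h2' : ‖-((ρ / ‖y‖) • y) - (c - o)‖ ^ 2 = ‖(ρ / ‖y‖) • y + (c - o)‖ ^ 2 := by
        rw [← norm_neg]; congr 1; abel
      rw [h2', norm_add_sq_real] at h2
      have hip : ⟪(ρ / ‖y‖) • y, c - o⟫ = 0 := by nlinarith
      rw [real_inner_smul_left] at hip
      have : ρ / ‖y‖ ≠ 0 := div_ne_zero hρ.ne' hyn
      rw [real_inner_comm]
      exact (mul_eq_zero.mp hip).resolve_left this
  refine ⟨perp, ?_⟩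
  obtain ⟨u, huP, hu1⟩ := hU
  have h1 := key (ρ • u) (Submodule.smul_mem _ _ huP)
    (by rw [norm_smul, hu1]; simp [abs_of_pos hρ])
  rw [norm_sub_sq_real] at h1
  have hip : ⟪ρ • u, c - o⟫ = 0 := by
    rw [real_inner_comm, real_inner_smul_right, perp u huP]; ring
  rw [hip, norm_smul, hu1] at h1
  have : |ρ| = ρ := abs_of_pos hρ
  simp only [Real.norm_eq_abs, this] at h1
  nlinarith

lemma exists_orthonormal_pair (V : Submodule ℝ E3) (hV : Module.finrank ℝ V = 2) :
    ∃ u v : E3, u ∈ V ∧ v ∈ V ∧ ‖u‖ = 1 ∧ ‖v‖ = 1 ∧ ⟪u, v⟫ = 0 := by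
  let b := (stdOrthonormalBasis ℝ V).reindex (finCongr hV)
  have hb := b.orthonormal
  refine ⟨(b 0 : E3), (b 1 : E3), (b 0).2, (b 1).2, ?_, ?_, ?_⟩
  · exact hb.1 0
  · exact hb.1 1
  · have := hb.2 (i := 0) (j := 1) (by decide)
    simp only at this
    rw [Submodule.coe_inner] at this
    exact this

lemma line_nonempty (L : AffineSubspace ℝ E3) (hL : Module.finrank ℝ L.direction = 1) :
    (L : Set E3).Nonempty := by
  by_contra h
  rw [Set.not_nonempty_iff_eq_empty, AffineSubspace.coe_eq_bot_iff] at h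
  rw [h, AffineSubspace.direction_bot] at hL
  simp at hL

lemma lines_meet (P : AffineSubspace ℝ E3) (hP : Module.finrank ℝ P.direction = 2)
    (L M : AffineSubspace ℝ E3)
    (hL : Module.finrank ℝ L.direction = 1) (hM : Module.finrank ℝ M.direction = 1)
    (hLP : (L : Set E3) ⊆ (P : Set E3)) (hMP : (M : Set E3) ⊆ (P : Set E3))
    (hne : L.direction ≠ M.direction) :
    ((L : Set E3) ∩ (M : Set E3)).Nonempty := by
  obtain ⟨p, hp⟩ := line_nonempty L hL
  obtain ⟨q, hq⟩ := line_nonempty M hM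
  have hLd : L.direction ≤ P.direction :=
    AffineSubspace.direction_le (SetLike.coe_subset_coe.mp hLP)
  have hMd : M.direction ≤ P.direction :=
    AffineSubspace.direction_le (SetLike.coe_subset_coe.mp hMP)
  have hlt : L.direction < L.direction ⊔ M.direction := by
    rw [lt_iff_le_and_ne]
    refine ⟨le_sup_left, fun h => ?_⟩
    have : M.direction ≤ L.direction := h ▸ le_sup_right
    exact hne (Submodule.eq_of_le_of_finrank_le this (by rw [hL, hM])).symm
  have hsup_le : L.direction ⊔ M.direction ≤ P.direction := sup_le hLd hMd
  have h2le : 2 ≤ Module.finrank ℝ (L.direction ⊔ M.direction : Submodule ℝ E3) := by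
    have := Submodule.finrank_lt_finrank_of_lt hlt
    omega
  have hsup : L.direction ⊔ M.direction = P.direction :=
    Submodule.eq_of_le_of_finrank_le hsup_le (by omega)
  have hqp : q -ᵥ p ∈ L.direction ⊔ M.direction := by
    rw [hsup]
    exact AffineSubspace.vsub_mem_direction (hMP hq) (hLP hp)
  rw [Submodule.mem_sup] at hqp
  obtain ⟨a, ha, b, hb, hab⟩ := hqp
  refine ⟨a +ᵥ p, AffineSubspace.vadd_mem_of_mem_direction ha hp, ?_⟩
  have heq : a +ᵥ p = (-b) +ᵥ q := by
    simp only [vadd_eq_add, vsub_eq_sub] at *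
    have h' : a + b = q - p := hab
    have : a = q - p - b := by rw [← h']; abel
    rw [this]; abel
  rw [heq]
  exact AffineSubspace.vadd_mem_of_mem_direction (Submodule.neg_mem _ hb) hq

lemma pair_inner (u v : E3) (hu : ‖u‖ = 1) (hv : ‖v‖ = 1) (huv : ⟪u, v⟫ = 0) (a b c d : ℝ) :
    ⟪a • u + b • v, c • u + d • v⟫ = a * c + b * d := by
  have hvu : ⟪v, u⟫ = 0 := by rw [real_inner_comm]; exact huv
  have huu : ⟪u, u⟫ = 1 := by rw [real_inner_self_eq_norm_sq, hu]; norm_num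
  have hvv : ⟪v, v⟫ = 1 := by rw [real_inner_self_eq_norm_sq, hv]; norm_num
  simp only [inner_add_left, inner_add_right, real_inner_smul_left, real_inner_smul_right,
    huv, hvu, huu, hvv]
  ring

lemma pair_norm_sq (u v : E3) (hu : ‖u‖ = 1) (hv : ‖v‖ = 1) (huv : ⟪u, v⟫ = 0) (a b : ℝ) :
    ‖a • u + b • v‖ ^ 2 = a ^ 2 + b ^ 2 := by
  rw [← real_inner_self_eq_norm_sq, pair_inner u v hu hv huv]; ring

set_option maxHeartbeats 1000000 in
/-- Three spheres meeting in a common circle whose plane `P` contains the line `ℓ`: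
every line of `P` tangent to the circle and not parallel to `ℓ` meets `ℓ` and is
tangent to all three spheres, and the set of such common tangents is infinite. -/
theorem spheres_through_common_circle
    (P : AffineSubspace ℝ E3) (hP : IsPlane P)
    (ℓ : AffineSubspace ℝ E3) (hℓ : IsLine ℓ) (hℓP : (ℓ : Set E3) ⊆ (P : Set E3))
    (o : E3) (hoP : o ∈ P) (ρ : ℝ) (hρ : 0 < ρ)
    (c₁ c₂ c₃ : E3) (r₁ r₂ r₃ : ℝ)
    (hr₁ : 0 < r₁) (hr₂ : 0 < r₂) (hr₃ : 0 < r₃)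
    (h₁ : (P : Set E3) ∩ Metric.sphere o ρ ⊆ Metric.sphere c₁ r₁)
    (h₂ : (P : Set E3) ∩ Metric.sphere o ρ ⊆ Metric.sphere c₂ r₂)
    (h₃ : (P : Set E3) ∩ Metric.sphere o ρ ⊆ Metric.sphere c₃ r₃) :
    (∀ L : AffineSubspace ℝ E3, IsLine L → (L : Set E3) ⊆ (P : Set E3) →
      Metric.infDist o (L : Set E3) = ρ → L.direction ≠ ℓ.direction →
      Meets L ℓ ∧ Tangent c₁ r₁ L ∧ Tangent c₂ r₂ L ∧ Tangent c₃ r₃ L) ∧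
    {L : AffineSubspace ℝ E3 | IsLine L ∧ Meets L ℓ ∧
        Tangent c₁ r₁ L ∧ Tangent c₂ r₂ L ∧ Tangent c₃ r₃ L}.Infinite := by
  classical
  obtain ⟨u, v, huV, hvV, hu, hv, huv⟩ := exists_orthonormal_pair P.direction hP
  have hU : ∃ z : E3, z ∈ P.direction ∧ ‖z‖ = 1 := ⟨u, huV, hu⟩
  obtain ⟨hperp₁, hnorm₁⟩ := sphere_center P o hoP ρ hρ hU c₁ r₁ h₁
  obtain ⟨hperp₂, hnorm₂⟩ := sphere_center P o hoP ρ hρ hU c₂ r₂ h₂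
  obtain ⟨hperp₃, hnorm₃⟩ := sphere_center P o hoP ρ hρ hU c₃ r₃ h₃
  have part1 : ∀ L : AffineSubspace ℝ E3, IsLine L → (L : Set E3) ⊆ (P : Set E3) →
      Metric.infDist o (L : Set E3) = ρ → L.direction ≠ ℓ.direction →
      Meets L ℓ ∧ Tangent c₁ r₁ L ∧ Tangent c₂ r₂ L ∧ Tangent c₃ r₃ L := by
    intro L hL hLsub hLdist hLdir
    have hLne := line_nonempty L hL
    exact ⟨lines_meet P hP L ℓ hL hℓ hLsub hℓP hLdir,
      key_tangent P o c₁ ρ r₁ hρ hr₁ hperp₁ hnorm₁ L hLne hLsub hoP hLdist,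
      key_tangent P o c₂ ρ r₂ hρ hr₂ hperp₂ hnorm₂ L hLne hLsub hoP hLdist,
      key_tangent P o c₃ ρ r₃ hρ hr₃ hperp₃ hnorm₃ L hLne hLsub hoP hLdist⟩
  refine ⟨part1, ?_⟩
  -- the family of tangent lines
  set w : ℝ → E3 := fun t => Real.cos t • u + Real.sin t • v with hwdef
  set w' : ℝ → E3 := fun t => (-Real.sin t) • u + Real.cos t • v with hw'def
  have hwn : ∀ t, ‖w t‖ = 1 := by
    intro t
    have := pair_norm_sq u v hu hv huv (Real.cos t) (Real.sin t)
    have h1 : ‖w t‖ ^ 2 = 1 := by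
      rw [hwdef]; simp only; rw [this, ← Real.sin_sq_add_cos_sq t]; ring
    nlinarith [norm_nonneg (w t)]
  have hw'n : ∀ t, ‖w' t‖ = 1 := by
    intro t
    have := pair_norm_sq u v hu hv huv (-Real.sin t) (Real.cos t)
    have h1 : ‖w' t‖ ^ 2 = 1 := by
      rw [hw'def]; simp only; rw [this, ← Real.sin_sq_add_cos_sq t]; ring
    nlinarith [norm_nonneg (w' t)]
  have hw'0 : ∀ t, w' t ≠ 0 := by
    intro t h
    have := hw'n t
    rw [h, norm_zero] at this
    norm_num at this
  have hwV : ∀ t, w t ∈ P.direction := fun t =>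
    Submodule.add_mem _ (Submodule.smul_mem _ _ huV) (Submodule.smul_mem _ _ hvV)
  have hw'V : ∀ t, w' t ∈ P.direction := fun t =>
    Submodule.add_mem _ (Submodule.smul_mem _ _ huV) (Submodule.smul_mem _ _ hvV)
  have hcoefu : ∀ a b : ℝ, ⟪a • u + b • v, u⟫ = a := by
    intro a b
    have := pair_inner u v hu hv huv a b 1 0
    simpa using this
  have hcoefv : ∀ a b : ℝ, ⟪a • u + b • v, v⟫ = b := by
    intro a b
    have := pair_inner u v hu hv huv a b 0 1
    simpa using this
  set Lf : ℝ → AffineSubspace ℝ E3 :=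
    fun t => AffineSubspace.mk' (ρ • w t + o) (ℝ ∙ (w' t)) with hLfdef
  have hdir : ∀ t, (Lf t).direction = ℝ ∙ (w' t) := fun t => AffineSubspace.direction_mk' _ _
  have hline : ∀ t, IsLine (Lf t) := by
    intro t
    rw [IsLine, hdir t]
    exact finrank_span_singleton (hw'0 t)
  have hmem : ∀ t q, q ∈ Lf t ↔ ∃ s : ℝ, q = s • w' t + (ρ • w t + o) := by
    intro t q
    rw [hLfdef]
    simp only
    rw [AffineSubspace.mem_mk', Submodule.mem_span_singleton]
    constructor
    · rintro ⟨s, hs⟩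
      refine ⟨s, ?_⟩
      have : q - (ρ • w t + o) = s • w' t := by rw [hs]; simp [vsub_eq_sub]
      rw [← this]; abel
    · rintro ⟨s, rfl⟩
      exact ⟨s, by simp [vsub_eq_sub]⟩
  have hpt_mem : ∀ t, (ρ • w t + o) ∈ Lf t := fun t => AffineSubspace.self_mem_mk' _ _
  have hsub : ∀ t, (Lf t : Set E3) ⊆ (P : Set E3) := by
    intro t q hq
    obtain ⟨s, rfl⟩ := (hmem t q).mp hq
    have : s • w' t + (ρ • w t + o) = (s • w' t + ρ • w t) +ᵥ o := by
      simp [vadd_eq_add]; abel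
    rw [this]
    exact AffineSubspace.vadd_mem_of_mem_direction
      (Submodule.add_mem _ (Submodule.smul_mem _ _ (hw'V t)) (Submodule.smul_mem _ _ (hwV t))) hoP
  have hcomb : ∀ t s : ℝ, ρ • w t + s • w' t =
      (ρ * Real.cos t - s * Real.sin t) • u + (ρ * Real.sin t + s * Real.cos t) • v := by
    intro t s
    rw [hwdef, hw'def]
    simp only
    module
  have hcombn : ∀ t s : ℝ, ‖ρ • w t + s • w' t‖ ^ 2 = ρ ^ 2 + s ^ 2 := by
    intro t s
    rw [hcomb t s, pair_norm_sq u v hu hv huv]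
    linear_combination (ρ^2 + s^2) * Real.sin_sq_add_cos_sq t
  have hdistpt : ∀ t, dist o (ρ • w t + o) = ρ := by
    intro t
    rw [dist_eq_norm]
    have : o - (ρ • w t + o) = -(ρ • w t) := by abel
    rw [this, norm_neg, norm_smul, hwn t, Real.norm_eq_abs, abs_of_pos hρ]
    ring
  have hinf : ∀ t, Metric.infDist o (Lf t : Set E3) = ρ := by
    intro t
    refine le_antisymm (by rw [← hdistpt t]; exact Metric.infDist_le_dist_of_mem (hpt_mem t))
      (my_le_infDist ⟨_, hpt_mem t⟩ ?_)
    intro q hq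
    obtain ⟨s, rfl⟩ := (hmem t q).mp hq
    have hd : dist o (s • w' t + (ρ • w t + o)) = ‖ρ • w t + s • w' t‖ := by
      rw [dist_eq_norm]
      have : o - (s • w' t + (ρ • w t + o)) = -(ρ • w t + s • w' t) := by abel
      rw [this, norm_neg]
    rw [hd]
    nlinarith [hcombn t s, norm_nonneg (ρ • w t + s • w' t)]
  -- cos facts
  have hπ : (1:ℝ) < Real.pi / 2 := by nlinarith [Real.pi_gt_three]
  have hcospos : ∀ t ∈ Ioo (0:ℝ) 1, 0 < Real.cos t := by
    intro t ht
    apply Real.cos_pos_of_mem_Ioo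
    constructor
    · nlinarith [ht.1, Real.pi_gt_three]
    · nlinarith [ht.2]
  have hIccsub : Ioo (0:ℝ) 1 ⊆ Icc 0 Real.pi := by
    intro t ht
    exact ⟨ht.1.le, by nlinarith [ht.2, Real.pi_gt_three]⟩
  -- the bad set is a subsingleton
  set bad : Set ℝ := {t ∈ Ioo (0:ℝ) 1 | (ℝ ∙ (w' t)) = ℓ.direction} with hbaddef
  have hbadsub : bad.Subsingleton := by
    intro t ht t' ht'
    have hspan : (ℝ ∙ (w' t)) = (ℝ ∙ (w' t')) := by rw [ht.2, ht'.2]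
    have hmem' : w' t ∈ (ℝ ∙ (w' t') : Submodule ℝ E3) := by
      rw [← hspan]; exact Submodule.mem_span_singleton_self _
    obtain ⟨c, hc⟩ := Submodule.mem_span_singleton.mp hmem'
    have hnc : |c| = 1 := by
      have : ‖c • w' t'‖ = ‖w' t‖ := by rw [hc]
      rw [norm_smul, hw'n t', hw'n t, Real.norm_eq_abs] at this
      linarith [this]
    have hcoseq : Real.cos t = c * Real.cos t' := by
      have h1 : ⟪w' t, v⟫ = Real.cos t := by rw [hw'def]; exact hcoefv _ _
      have h2 : ⟪c • w' t', v⟫ = c * Real.cos t' := by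
        rw [real_inner_smul_left, hw'def]
        simp only
        rw [hcoefv]
      rw [← h1, ← hc, h2]
    rcases abs_eq (by norm_num : (0:ℝ) ≤ 1) |>.mp hnc with rfl | rfl
    · rw [one_mul] at hcoseq
      exact Real.injOn_cos (hIccsub ht.1) (hIccsub ht'.1) hcoseq
    · exfalso
      have := hcospos t ht.1
      have := hcospos t' ht'.1
      nlinarith
  set S : Set ℝ := Ioo (0:ℝ) 1 \ bad with hSdef
  have hSinf : S.Infinite := (Set.Ioo_infinite (by norm_num)).diff hbadsub.finite
  have hSgood : ∀ t ∈ S, (Lf t).direction ≠ ℓ.direction := by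
    intro t ht h
    exact ht.2 ⟨ht.1, by rw [← hdir t]; exact h⟩
  have hinj : InjOn Lf S := by
    intro t ht t' ht' h
    have hpt' : (ρ • w t' + o) ∈ Lf t := by rw [h]; exact hpt_mem t'
    obtain ⟨s, hs⟩ := (hmem t _).mp hpt'
    have heq2 : ρ • w t' = ρ • w t + s • w' t := by
      have : ρ • w t' + o = (ρ • w t + s • w' t) + o := by rw [hs]; abel
      have h3 := congrArg (· - o) this
      simpa using h3
    have hwcomb : ∀ τ : ℝ, ρ • w τ = (ρ * Real.cos τ) • u + (ρ * Real.sin τ) • v := by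
      intro τ; rw [hwdef]; simp only; module
    rw [hcomb t s, hwcomb t'] at heq2
    have hcos' : ρ * Real.cos t' = ρ * Real.cos t - s * Real.sin t := by
      have := congrArg (fun z => ⟪z, u⟫) heq2
      simpa only [hcoefu] using this
    have hsin' : ρ * Real.sin t' = ρ * Real.sin t + s * Real.cos t := by
      have := congrArg (fun z => ⟪z, v⟫) heq2
      simpa only [hcoefv] using this
    have h1 : (ρ * Real.cos t') ^ 2 + (ρ * Real.sin t') ^ 2 = ρ ^ 2 := by
      linear_combination ρ ^ 2 * Real.sin_sq_add_cos_sq t'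
    rw [hcos', hsin'] at h1
    have hs2 : s ^ 2 = 0 := by
      linear_combination h1 - (ρ ^ 2 + s ^ 2) * Real.sin_sq_add_cos_sq t
    have hs0 : s = 0 := by
      have := sq_eq_zero_iff.mp hs2; exact this
    have hcc : Real.cos t' = Real.cos t := by
      rw [hs0] at hcos'
      have : ρ * Real.cos t' = ρ * Real.cos t := by linarith
      exact mul_left_cancel₀ hρ.ne' this
    exact Real.injOn_cos (hIccsub ht.1) (hIccsub ht'.1) hcc.symm
  have himg : Lf '' S ⊆ {L : AffineSubspace ℝ E3 | IsLine L ∧ Meets L ℓ ∧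
      Tangent c₁ r₁ L ∧ Tangent c₂ r₂ L ∧ Tangent c₃ r₃ L} := by
    rintro L ⟨t, ht, rfl⟩
    obtain ⟨hm, h1, h2, h3⟩ := part1 (Lf t) (hline t) (hsub t) (hinf t) (hSgood t ht)
    exact ⟨hline t, hm, h1, h2, h3⟩
  exact (hSinf.image hinj).mono himg
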